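/- Let n ≥ 3. The numbers p_{n,i} satisfy the following recurrence with initial conditions p_{3,−1} = 1 and p_{3,0} = 1. If n is even: p_{n+1,−1} = p_{n,−1}; p_{n+1,i} = p_{n,i−1} + p_{n,i} for 0 ≤ i ≤ n/2 − 2; and p_{n+1, n/2 − 1} = p_{n, n/2 − 2}. If n is odd: p_{n+1,−1} = p_{n,−1}; and p_{n+1,i} = p_{n,i−1} + p_{n,i} for 0 ≤ i ≤ (n−3)/2. -/

import Mathlib

open Finset Polynomial

/-- `σ` is a permutation of `[n] = {1, …, n}` (viewed as a function `ℕ → ℕ`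
restricted to a bijection of `{1, …, n}` onto itself). -/
def IsPermOn (n : ℕ) (σ : ℕ → ℕ) : Prop :=
  Set.BijOn σ (Set.Icc 1 n) (Set.Icc 1 n)

/-- The circular peak set of `σ` (as a permutation of `[n]`):
`CP(σ) = {σ(i) : 2 ≤ i ≤ n−1, σ(i−1) < σ(i) > σ(i+1)}`. -/
def CP (n : ℕ) (σ : ℕ → ℕ) : Finset ℕ :=
  ((Finset.Icc 2 (n - 1)).filter (fun i => σ (i - 1) < σ i ∧ σ (i + 1) < σ i)).image σ

open scoped Classical in
/-- `Pn n` is the collection of all subsets `S ⊆ [n]` arising as the circular peak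
set of some permutation of `[n]`. -/
noncomputable def Pn (n : ℕ) : Finset (Finset ℕ) :=
  (Finset.Icc 1 n).powerset.filter (fun S => ∃ σ : ℕ → ℕ, IsPermOn n σ ∧ CP n σ = S)

/-- `pcount n k` is the number of members of `Pn n` of cardinality `k`;
in the paper's notation, `p_{n,i} = pcount n (i+1)`. -/
noncomputable def pcount (n k : ℕ) : ℕ :=
  ((Pn n).filter (fun S => S.card = k)).card

/-- The f-polynomial `P_n(x) = Σ_{i=0}^{⌊(n−1)/2⌋} p_{n,i−1} x^{⌊(n−1)/2⌋−i}`. -/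
noncomputable def fpoly (n : ℕ) : Polynomial ℚ :=
  ∑ i ∈ Finset.range ((n - 1) / 2 + 1),
    Polynomial.C (pcount n i : ℚ) * Polynomial.X ^ ((n - 1) / 2 - i)

def Cond (S : Finset ℕ) : Prop := ∀ x ∈ S, 2 * #(S.filter (· ≤ x)) < x

instance : DecidablePred Cond := fun S =>
  inferInstanceAs (Decidable (∀ x ∈ S, 2 * #(S.filter (· ≤ x)) < x))


lemma count_mem_eq (S : Finset ℕ) (x : ℕ) :
    Nat.count (· ∈ S) x = #(S.filter (· < x)) := by
  rw [Nat.count_eq_card_filter_range]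
  apply Finset.card_nbij' id id <;> simp +contextual [Finset.mem_filter, Set.MapsTo, Set.LeftInvOn, Set.RightInvOn]

lemma card_filter_le_eq (S : Finset ℕ) {x : ℕ} (hx : x ∈ S) :
    #(S.filter (· ≤ x)) = Nat.count (· ∈ S) x + 1 := by
  have h1 : S.filter (· ≤ x) = S.filter (· < x + 1) := by
    apply Finset.filter_congr; intro a _; simp [Nat.lt_succ_iff]
  rw [h1, ← count_mem_eq, Nat.count_succ, if_pos hx]


lemma CP_subset {n : ℕ} {σ : ℕ → ℕ} (h : IsPermOn n σ) : CP n σ ⊆ Finset.Icc 1 n := by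
  intro x hx
  simp only [CP, Finset.mem_image, Finset.mem_filter, Finset.mem_Icc] at hx
  obtain ⟨i, ⟨⟨h2, h3⟩, _⟩, rfl⟩ := hx
  have hi : i ∈ Set.Icc 1 n := ⟨by omega, by omega⟩
  have := h.mapsTo hi
  simpa [Finset.mem_Icc] using this

lemma cond_CP {n : ℕ} {σ : ℕ → ℕ} (h : IsPermOn n σ) : Cond (CP n σ) := by
  classical
  intro x hx
  simp only [CP] at hx ⊢
  set P := (Finset.Icc 2 (n-1)).filter (fun i => σ (i-1) < σ i ∧ σ (i+1) < σ i) with hPdef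
  have hPmem : ∀ i ∈ P, (2 ≤ i ∧ i ≤ n - 1) ∧ σ (i-1) < σ i ∧ σ (i+1) < σ i := by
    intro i hi
    simpa [hPdef, Finset.mem_Icc] using hi
  set T := P.filter (fun i => σ i ≤ x) with hTdef
  have hTmem : ∀ i ∈ T, ((2 ≤ i ∧ i ≤ n - 1) ∧ σ (i-1) < σ i ∧ σ (i+1) < σ i) ∧ σ i ≤ x := by
    intro i hi
    rw [hTdef, Finset.mem_filter] at hi
    exact ⟨hPmem _ hi.1, hi.2⟩
  have hTIcc : ∀ i ∈ T, i ∈ Set.Icc 1 n := fun i hi => by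
    have := (hTmem i hi).1.1; exact ⟨by omega, by omega⟩
  -- T nonempty
  rw [Finset.mem_image] at hx
  obtain ⟨p, hp, hpx⟩ := hx
  have hpT : p ∈ T := by
    rw [hTdef, Finset.mem_filter]
    exact ⟨hp, le_of_eq hpx⟩
  have hTne : T.Nonempty := ⟨p, hpT⟩
  -- filter of CP equals image of T
  have himg : (P.image σ).filter (· ≤ x) = T.image σ := by
    ext y
    rw [Finset.mem_filter, Finset.mem_image, Finset.mem_image]
    constructor
    · rintro ⟨⟨i, hi, rfl⟩, hle⟩
      refine ⟨i, ?_, rfl⟩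
      rw [hTdef, Finset.mem_filter]
      exact ⟨hi, hle⟩
    · rintro ⟨i, hi, rfl⟩
      rw [hTdef, Finset.mem_filter] at hi
      exact ⟨⟨i, hi.1, rfl⟩, hi.2⟩
  have hinj : Set.InjOn σ (Set.Icc 1 n) := h.injOn
  have hcardT : #((P.image σ).filter (· ≤ x)) = #T := by
    rw [himg]
    exact Finset.card_image_of_injOn (fun a ha b hb => hinj (hTIcc a ha) (hTIcc b hb))
  -- the big set U
  set V := (T.image (· + 1)) ∪ (T.image (· - 1)) with hVdef
  set U := T ∪ V with hUdef
  have hnoadj : ∀ a ∈ T, ∀ b ∈ T, a ≠ b + 1 := by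
    intro a ha b hb hab
    subst hab
    have h1 := (hTmem (b+1) ha).1.2.1
    have h2 := (hTmem b hb).1.2.2
    simp only [Nat.add_sub_cancel] at h1
    omega
  have hdisj : Disjoint T V := by
    rw [Finset.disjoint_left]
    intro a ha haV
    rw [hVdef, Finset.mem_union, Finset.mem_image, Finset.mem_image] at haV
    rcases haV with ⟨b, hb, hba⟩ | ⟨b, hb, hba⟩
    · exact hnoadj a ha b hb hba.symm
    · have hb2 : 2 ≤ b := (hTmem b hb).1.1.1
      exact hnoadj b hb a ha (by omega)
  have hVcard : #T + 1 ≤ #V := by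
    set m := T.min' hTne with hm
    have hmT := T.min'_mem hTne
    have hm2 : 2 ≤ m := (hTmem m hmT).1.1.1
    have hnotmem : m - 1 ∉ T.image (· + 1) := by
      intro hmem
      rw [Finset.mem_image] at hmem
      obtain ⟨b, hb, hbm⟩ := hmem
      have := T.min'_le b hb
      omega
    have hsub : insert (m - 1) (T.image (· + 1)) ⊆ V := by
      intro a ha
      rw [Finset.mem_insert] at ha
      rw [hVdef, Finset.mem_union]
      rcases ha with rfl | ha
      · exact Or.inr (Finset.mem_image.2 ⟨m, hmT, rfl⟩)
      · exact Or.inl ha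
    calc #T + 1 = #(T.image (· + 1)) + 1 := by
              rw [Finset.card_image_of_injective _ (add_left_injective 1)]
      _ = #(insert (m - 1) (T.image (· + 1))) := (Finset.card_insert_of_notMem hnotmem).symm
      _ ≤ #V := Finset.card_le_card hsub
  have hUIcc : ∀ u ∈ U, u ∈ Set.Icc 1 n ∧ σ u ≤ x := by
    intro u hu
    rw [hUdef, Finset.mem_union, hVdef, Finset.mem_union, Finset.mem_image, Finset.mem_image] at hu
    rcases hu with hu | ⟨b, hb, rfl⟩ | ⟨b, hb, rfl⟩
    · exact ⟨hTIcc u hu, (hTmem u hu).2⟩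
    · obtain ⟨⟨⟨hb2, hbn⟩, _, hlt⟩, hble⟩ := hTmem b hb
      exact ⟨⟨by omega, by omega⟩, by omega⟩
    · obtain ⟨⟨⟨hb2, hbn⟩, hlt, _⟩, hble⟩ := hTmem b hb
      exact ⟨⟨by omega, by omega⟩, by omega⟩
  have hUimg : U.image σ ⊆ Finset.Icc 1 x := by
    intro y hy
    rw [Finset.mem_image] at hy
    obtain ⟨u, hu, rfl⟩ := hy
    obtain ⟨huIcc, hux⟩ := hUIcc u hu
    have := h.mapsTo huIcc
    rw [Set.mem_Icc] at this
    exact Finset.mem_Icc.2 ⟨this.1, hux⟩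
  have hUcard : #U ≤ x := by
    have h1 : #U = #(U.image σ) :=
      (Finset.card_image_of_injOn (fun a ha b hb => hinj (hUIcc a ha).1 (hUIcc b hb).1)).symm
    calc #U = #(U.image σ) := h1
      _ ≤ #(Finset.Icc 1 x) := Finset.card_le_card hUimg
      _ = x := by rw [Nat.card_Icc]; omega
  have hUc : #U = #T + #V := by
    rw [hUdef, Finset.card_union_of_disjoint hdisj]
  omega

lemma exists_perm {n : ℕ} (hn : 1 ≤ n) {S : Finset ℕ} (hS : S ⊆ Finset.Icc 1 n)
    (hC : Cond S) : ∃ σ : ℕ → ℕ, IsPermOn n σ ∧ CP n σ = S := by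
  classical
  set k := #S with hk
  set T := (Finset.Icc 1 n) \ S with hTdef
  have hTsub : T ⊆ Finset.Icc 1 n := Finset.sdiff_subset
  have hTcard : #T = n - k := by
    rw [hTdef, Finset.card_sdiff_of_subset hS, Nat.card_Icc]; omega
  set E := fun j => Nat.nth (· ∈ S) j with hE
  set F := fun j => Nat.nth (· ∈ T) j with hF
  have hSfin : (Set.ofPred (· ∈ S)).Finite := S.finite_toSet
  have hTfin : (Set.ofPred (· ∈ T)).Finite := T.finite_toSet
  have hScard : #hSfin.toFinset = k := by rw [Finset.finite_toSet_toFinset, hk]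
  have hTcard' : #hTfin.toFinset = n - k := by rw [Finset.finite_toSet_toFinset, hTcard]
  have hE_mem : ∀ j, j < k → E j ∈ S := fun j hj =>
    Nat.nth_mem_of_lt_card hSfin (by rw [hScard]; exact hj)
  have hE_count : ∀ j, j < k → Nat.count (· ∈ S) (E j) = j := fun j hj =>
    Nat.count_nth_of_lt_card_finite hSfin (by rw [hScard]; exact hj)
  have hE_inj : ∀ j, j < k → ∀ j', j' < k → E j = E j' → j = j' := by
    intro j hj j' hj' hjj
    rw [← hE_count j hj, ← hE_count j' hj', hjj]
  have hE_rng : ∀ j, j < k → 1 ≤ E j ∧ E j ≤ n := by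
    intro j hj
    have := hS (hE_mem j hj)
    rwa [Finset.mem_Icc] at this
  have hE_lb : ∀ j, j < k → 2*j+3 ≤ E j := by
    intro j hj
    have h1 := hC _ (hE_mem j hj)
    rw [card_filter_le_eq S (hE_mem j hj), hE_count j hj] at h1
    omega
  have h2k : 2*k < n := by
    rcases Nat.eq_zero_or_pos k with h0 | h0
    · omega
    · have := hE_lb (k-1) (by omega)
      have := (hE_rng (k-1) (by omega)).2
      omega
  have hF_mem : ∀ j, j < n - k → F j ∈ T := fun j hj =>
    Nat.nth_mem_of_lt_card hTfin (by rw [hTcard']; exact hj)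
  have hF_count : ∀ j, j < n - k → Nat.count (· ∈ T) (F j) = j := fun j hj =>
    Nat.count_nth_of_lt_card_finite hTfin (by rw [hTcard']; exact hj)
  have hF_inj : ∀ j, j < n - k → ∀ j', j' < n - k → F j = F j' → j = j' := by
    intro j hj j' hj' hjj
    rw [← hF_count j hj, ← hF_count j' hj', hjj]
  have hF_rng : ∀ j, j < n - k → 1 ≤ F j ∧ F j ≤ n := by
    intro j hj
    have := hTsub (hF_mem j hj)
    rwa [Finset.mem_Icc] at this
  have hF_lt : ∀ i j, i < j → j < n - k → F i < F j := fun i j hij hj =>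
    Nat.nth_lt_nth_of_lt_card hTfin hij (by rw [hTcard']; exact hj)
  have hF_notS : ∀ j, j < n - k → F j ∉ S := by
    intro j hj
    have := hF_mem j hj
    rw [hTdef, Finset.mem_sdiff] at this
    exact this.2
  -- key inequality: F j' < E j for j' ≤ j + 1
  have hFE : ∀ j, j < k → ∀ j', j' ≤ j + 1 → F j' < E j := by
    intro j hj j' hj'
    have hEn := (hE_rng j hj).2
    have hTf : T.filter (· < E j) = ((Finset.Icc 1 n).filter (· < E j)) \ (S.filter (· < E j)) := by
      ext a
      simp only [hTdef, Finset.mem_sdiff, Finset.mem_filter]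
      tauto
    have hIf : (Finset.Icc 1 n).filter (· < E j) = Finset.Icc 1 (E j - 1) := by
      ext a
      simp only [Finset.mem_filter, Finset.mem_Icc]
      omega
    have hsub2 : S.filter (· < E j) ⊆ (Finset.Icc 1 n).filter (· < E j) :=
      Finset.filter_subset_filter _ hS
    have hcnt : Nat.count (· ∈ T) (E j) = (E j - 1) - j := by
      rw [count_mem_eq, hTf, Finset.card_sdiff_of_subset hsub2, hIf, Nat.card_Icc,
        ← count_mem_eq, hE_count j hj]
      omega
    have hlb := hE_lb j hj
    apply Nat.nth_lt_of_lt_count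
    omega
  -- the permutation
  set σ := fun i => if Even i ∧ i ≤ 2*k then E (i/2 - 1)
    else if i ≤ 2*k+1 then F ((i-1)/2) else F (i - (k+1)) with hσ
  have vE : ∀ j, j < k → σ (2*j+2) = E j := by
    intro j hj
    have hcond : Even (2*j+2) ∧ 2*j+2 ≤ 2*k := ⟨⟨j+1, by ring⟩, by omega⟩
    rw [hσ]
    simp only
    rw [if_pos hcond]
    congr 1
    omega
  have vO : ∀ j, j ≤ k → σ (2*j+1) = F j := by
    intro j hj
    have hodd : ¬(Even (2*j+1) ∧ 2*j+1 ≤ 2*k) := by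
      rintro ⟨⟨r, hr⟩, -⟩; omega
    rw [hσ]
    simp only
    rw [if_neg hodd, if_pos (by omega : 2*j+1 ≤ 2*k+1)]
    congr 1
    omega
  have vT : ∀ i, 2*k+2 ≤ i → σ i = F (i - (k+1)) := by
    intro i hi
    have h1 : ¬(Even i ∧ i ≤ 2*k) := by rintro ⟨-, h⟩; omega
    rw [hσ]
    simp only
    rw [if_neg h1, if_neg (by omega : ¬ i ≤ 2*k+1)]
  have cases3 : ∀ i, 1 ≤ i →
      (∃ j, j < k ∧ i = 2*j+2) ∨ (∃ j, j ≤ k ∧ i = 2*j+1) ∨ 2*k+2 ≤ i := by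
    intro i hi
    rcases Nat.even_or_odd i with ⟨r, hr⟩ | ⟨r, hr⟩
    · by_cases h : i ≤ 2*k
      · exact Or.inl ⟨r - 1, by omega, by omega⟩
      · exact Or.inr (Or.inr (by omega))
    · by_cases h : i ≤ 2*k+1
      · exact Or.inr (Or.inl ⟨r, by omega, by omega⟩)
      · exact Or.inr (Or.inr (by omega))
  -- unified description
  have desc : ∀ i, 1 ≤ i → i ≤ n →
      (∃ j, j < k ∧ i = 2*j+2 ∧ σ i = E j) ∨
      (∃ j, j < n - k ∧ σ i = F j ∧ ((j ≤ k ∧ i = 2*j+1) ∨ (k+1 ≤ j ∧ i = j + k + 1))) := by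
    intro i h1 h2
    rcases cases3 i h1 with ⟨j, hj, rfl⟩ | ⟨j, hj, rfl⟩ | h
    · exact Or.inl ⟨j, hj, rfl, vE j hj⟩
    · exact Or.inr ⟨j, by omega, vO j hj, Or.inl ⟨hj, rfl⟩⟩
    · refine Or.inr ⟨i - (k+1), by omega, vT i h, Or.inr ⟨by omega, by omega⟩⟩
  have hmaps : Set.MapsTo σ (Set.Icc 1 n) (Set.Icc 1 n) := by
    intro i hi
    rw [Set.mem_Icc] at hi
    rcases desc i hi.1 hi.2 with ⟨j, hj, -, hv⟩ | ⟨j, hj, hv, -⟩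
    · rw [hv]; exact Set.mem_Icc.2 (hE_rng j hj)
    · rw [hv]; exact Set.mem_Icc.2 (hF_rng j hj)
  have hinj : Set.InjOn σ (Set.Icc 1 n) := by
    intro a ha b hb heq
    rw [Set.mem_Icc] at ha hb
    rcases desc a ha.1 ha.2 with ⟨j, hj, hja, hv⟩ | ⟨j, hj, hv, hja⟩ <;>
      rcases desc b hb.1 hb.2 with ⟨j', hj', hjb, hv'⟩ | ⟨j', hj', hv', hjb⟩
    · rw [hv, hv'] at heq
      have := hE_inj j hj j' hj' heq
      omega
    · rw [hv, hv'] at heq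
      exact absurd (heq ▸ hE_mem j hj) (hF_notS j' hj')
    · rw [hv, hv'] at heq
      exact absurd (heq.symm ▸ hE_mem j' hj') (hF_notS j hj)
    · rw [hv, hv'] at heq
      have := hF_inj j hj j' hj' heq
      omega
  have hsurj : Set.SurjOn σ (Set.Icc 1 n) (Set.Icc 1 n) := by
    intro y hy
    rw [Set.mem_Icc] at hy
    by_cases hyS : y ∈ S
    · set j := Nat.count (· ∈ S) y with hj
      have hjk : j < k := by
        have := Nat.count_lt_card hSfin hyS
        rwa [hScard] at this
      refine ⟨2*j+2, Set.mem_Icc.2 ⟨by omega, by omega⟩, ?_⟩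
      rw [vE j hjk, hE]
      exact Nat.nth_count hyS
    · have hyT : y ∈ T := by
        rw [hTdef, Finset.mem_sdiff]
        exact ⟨Finset.mem_Icc.2 hy, hyS⟩
      set j := Nat.count (· ∈ T) y with hj
      have hjk : j < n - k := by
        have := Nat.count_lt_card hTfin hyT
        rwa [hTcard'] at this
      by_cases hjle : j ≤ k
      · refine ⟨2*j+1, Set.mem_Icc.2 ⟨by omega, by omega⟩, ?_⟩
        rw [vO j hjle, hF]
        exact Nat.nth_count hyT
      · refine ⟨j+k+1, Set.mem_Icc.2 ⟨by omega, by omega⟩, ?_⟩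
        rw [vT (j+k+1) (by omega)]
        have hidx : j+k+1 - (k+1) = j := by omega
        rw [hidx, hF]
        exact Nat.nth_count hyT
  -- peak positions
  have hQ : (Finset.Icc 2 (n-1)).filter (fun i => σ (i - 1) < σ i ∧ σ (i + 1) < σ i)
      = (Finset.range k).image (fun j => 2*j+2) := by
    ext i
    rw [Finset.mem_filter, Finset.mem_image, Finset.mem_Icc]
    constructor
    · rintro ⟨⟨h2, hn1⟩, hp1, hp2⟩
      rcases cases3 i (by omega) with ⟨j, hj, rfl⟩ | ⟨j, hj, rfl⟩ | h
      · exact ⟨j, Finset.mem_range.2 hj, rfl⟩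
      · exfalso
        have hvO := vO j hj
        rcases Nat.lt_or_ge j k with hjk | hjk
        · have : (2*j+1) + 1 = 2*j+2 := by omega
          rw [this, vE j hjk] at hp2
          have := hFE j hjk j (by omega)
          omega
        · have hjk' : j = k := by omega
          subst hjk'
          have h2n : 2*k+2 ≤ n := by omega
          have : (2*k+1) + 1 = 2*k+2 := by omega
          rw [this, vT (2*k+2) (by omega)] at hp2
          have hidx : 2*k+2 - (k+1) = k+1 := by omega
          rw [hidx] at hp2
          have := hF_lt k (k+1) (by omega) (by omega)
          omega
      · exfalso
        rw [vT i h, vT (i+1) (by omega)] at hp2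
        have := hF_lt (i - (k+1)) (i+1 - (k+1)) (by omega) (by omega)
        omega
    · rintro ⟨j, hj, rfl⟩
      rw [Finset.mem_range] at hj
      have hm1 : 2*j+2 - 1 = 2*j+1 := by omega
      have hp1 : 2*j+2+1 = 2*(j+1)+1 := by omega
      refine ⟨⟨by omega, by omega⟩, ?_, ?_⟩
      · rw [hm1, vO j (by omega), vE j hj]
        exact hFE j hj j (by omega)
      · rw [hp1, vO (j+1) (by omega), vE j hj]
        exact hFE j hj (j+1) (by omega)
  refine ⟨σ, ⟨hmaps, hinj, hsurj⟩, ?_⟩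
  have : CP n σ = ((Finset.range k).image (fun j => 2*j+2)).image σ := by
    rw [CP, hQ]
  rw [this, Finset.image_image]
  ext y
  rw [Finset.mem_image]
  constructor
  · rintro ⟨j, hj, rfl⟩
    rw [Finset.mem_range] at hj
    have : (σ ∘ fun j => 2*j+2) j = E j := vE j hj
    rw [this]
    exact hE_mem j hj
  · intro hy
    refine ⟨Nat.count (· ∈ S) y, Finset.mem_range.2 ?_, ?_⟩
    · have := Nat.count_lt_card hSfin hy
      rwa [hScard] at this
    · have hc : Nat.count (· ∈ S) y < k := by
        have := Nat.count_lt_card hSfin hy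
        rwa [hScard] at this
      have : (σ ∘ fun j => 2*j+2) (Nat.count (· ∈ S) y) = E (Nat.count (· ∈ S) y) :=
        vE _ hc
      rw [this, hE]
      exact Nat.nth_count hy

def Npc (n m : ℕ) : ℕ := #((Finset.Icc 1 n).powerset.filter (fun S => Cond S ∧ #S = m))

lemma mem_Pn_iff {n : ℕ} (hn : 1 ≤ n) {S : Finset ℕ} :
    S ∈ Pn n ↔ S ⊆ Finset.Icc 1 n ∧ Cond S := by
  simp only [Pn, Finset.mem_filter, Finset.mem_powerset]
  constructor
  · rintro ⟨hsub, σ, hperm, rfl⟩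
    exact ⟨hsub, cond_CP hperm⟩
  · rintro ⟨hsub, hc⟩
    exact ⟨hsub, exists_perm hn hsub hc⟩

lemma pcount_eq (n m : ℕ) (hn : 1 ≤ n) : pcount n m = Npc n m := by
  rw [pcount, Npc]
  congr 1
  ext S
  simp only [Finset.mem_filter, Finset.mem_powerset]
  rw [show (S ∈ Pn n) = (S ⊆ Finset.Icc 1 n ∧ Cond S) from propext (mem_Pn_iff hn)]
  tauto

lemma Npc_zero (n : ℕ) : Npc n 0 = 1 := by
  have h : (Finset.Icc 1 n).powerset.filter (fun S => Cond S ∧ #S = 0) = {∅} := by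
    ext S
    simp only [Finset.mem_filter, Finset.mem_powerset, Finset.mem_singleton, Finset.card_eq_zero]
    constructor
    · rintro ⟨-, -, h⟩; exact h
    · rintro rfl
      exact ⟨Finset.empty_subset _, fun x hx => absurd hx (Finset.notMem_empty x), rfl⟩
  rw [Npc, h, Finset.card_singleton]

lemma Npc_eq_zero {n m : ℕ} (h1 : 1 ≤ m) (h2 : n ≤ 2*m) : Npc n m = 0 := by
  rw [Npc, Finset.card_eq_zero, Finset.eq_empty_iff_forall_notMem]
  intro S hS
  rw [Finset.mem_filter, Finset.mem_powerset] at hS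
  obtain ⟨hsub, hc, hcard⟩ := hS
  have hne : S.Nonempty := Finset.card_pos.1 (by omega)
  have hx := S.max'_mem hne
  have h3 := hc _ hx
  have h4 : S.filter (· ≤ S.max' hne) = S :=
    Finset.filter_true_of_mem (fun a ha => S.le_max' a ha)
  rw [h4, hcard] at h3
  have := hsub hx
  rw [Finset.mem_Icc] at this
  omega

lemma Npc_succ {n m : ℕ} (h : 2*m+2 ≤ n) : Npc (n+1) (m+1) = Npc n (m+1) + Npc n m := by
  set A := (Finset.Icc 1 (n+1)).powerset.filter (fun S => Cond S ∧ #S = m+1) with hA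
  have hsplit := Finset.card_filter_add_card_filter_not
    (s := A) (p := fun S => n+1 ∈ S)
  have h1 : A.filter (fun S => ¬ n+1 ∈ S)
      = (Finset.Icc 1 n).powerset.filter (fun S => Cond S ∧ #S = m+1) := by
    ext S
    simp only [hA, Finset.mem_filter, Finset.mem_powerset]
    constructor
    · rintro ⟨⟨hsub, hc⟩, hnot⟩
      refine ⟨fun a ha => ?_, hc⟩
      have h5 := hsub ha
      have h6 : a ≠ n+1 := fun h' => hnot (h' ▸ ha)
      rw [Finset.mem_Icc] at h5 ⊢
      omega
    · rintro ⟨hsub, hc⟩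
      refine ⟨⟨fun a ha => ?_, hc⟩, fun hmem => ?_⟩
      · have h5 := hsub ha; rw [Finset.mem_Icc] at h5 ⊢; omega
      · have h5 := hsub hmem; rw [Finset.mem_Icc] at h5; omega
  have h2 : #(A.filter (fun S => n+1 ∈ S)) = Npc n m := by
    rw [Npc]
    apply Finset.card_nbij' (fun S => S.erase (n+1)) (fun S => insert (n+1) S)
    · intro S hS
      simp only [Finset.mem_coe, hA, Finset.mem_filter, Finset.mem_powerset] at hS
      obtain ⟨⟨hsub, hc, hcard⟩, hmem⟩ := hS
      simp only [Finset.mem_coe, Finset.mem_filter, Finset.mem_powerset]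
      refine ⟨fun a ha => ?_, fun x hx => ?_, ?_⟩
      · rw [Finset.mem_erase] at ha
        have h5 := hsub ha.2
        have h6 := ha.1
        rw [Finset.mem_Icc] at h5 ⊢
        omega
      · rw [Finset.mem_erase] at hx
        have h5 := hc x hx.2
        calc 2 * #((S.erase (n+1)).filter (· ≤ x)) ≤ 2 * #(S.filter (· ≤ x)) :=
              Nat.mul_le_mul_left 2 (Finset.card_le_card
                (Finset.filter_subset_filter _ (Finset.erase_subset _ _)))
          _ < x := h5
      · rw [Finset.card_erase_of_mem hmem, hcard]; omega
    · intro S hS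
      simp only [Finset.mem_coe, Finset.mem_filter, Finset.mem_powerset] at hS
      obtain ⟨hsub, hc, hcard⟩ := hS
      have hnot : n+1 ∉ S := fun hmem => by
        have h5 := hsub hmem; rw [Finset.mem_Icc] at h5; omega
      simp only [Finset.mem_coe, hA, Finset.mem_filter, Finset.mem_powerset]
      refine ⟨⟨fun a ha => ?_, fun x hx => ?_, ?_⟩, Finset.mem_insert_self _ _⟩
      · rw [Finset.mem_insert] at ha
        rcases ha with rfl | ha
        · rw [Finset.mem_Icc]; omega
        · have h5 := hsub ha; rw [Finset.mem_Icc] at h5 ⊢; omega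
      · rw [Finset.mem_insert] at hx
        rcases hx with rfl | hx
        · have hfil : (insert (n+1) S).filter (· ≤ n+1) = insert (n+1) S :=
            Finset.filter_true_of_mem (fun a ha => by
              rw [Finset.mem_insert] at ha
              rcases ha with rfl | ha
              · exact le_refl _
              · have h5 := hsub ha; rw [Finset.mem_Icc] at h5
                omega)
          rw [hfil, Finset.card_insert_of_notMem hnot, hcard]
          omega
        · have hxn : ¬ (n+1 ≤ x) := by
            have h5 := hsub hx; rw [Finset.mem_Icc] at h5; omega
          have hfil : (insert (n+1) S).filter (· ≤ x) = S.filter (· ≤ x) := by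
            rw [Finset.filter_insert, if_neg hxn]
          rw [hfil]
          exact hc x hx
      · rw [Finset.card_insert_of_notMem hnot, hcard]
    · intro S hS
      simp only [Finset.mem_coe, hA, Finset.mem_filter] at hS
      exact Finset.insert_erase hS.2
    · intro S hS
      simp only [Finset.mem_coe, Finset.mem_filter, Finset.mem_powerset] at hS
      refine Finset.erase_insert (fun hmem => ?_)
      have h5 := hS.1 hmem; rw [Finset.mem_Icc] at h5; omega
  have e1 : Npc (n+1) (m+1) = #A := rfl
  have e2 : Npc n (m+1) = #(A.filter (fun S => ¬ n+1 ∈ S)) := by rw [h1]; rfl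
  omega

/-- Corollary 3.3: recurrences for the numbers `p_{n,i}` (here `p_{n,i} = pcount n (i+1)`),
with initial conditions `p_{3,−1} = p_{3,0} = 1`. -/
theorem pcount_recurrence (n : ℕ) (hn : 3 ≤ n) :
    pcount 3 0 = 1 ∧ pcount 3 1 = 1 ∧
    (Even n →
      pcount (n + 1) 0 = pcount n 0 ∧
      (∀ i : ℕ, i + 2 ≤ n / 2 → pcount (n + 1) (i + 1) = pcount n i + pcount n (i + 1)) ∧
      pcount (n + 1) (n / 2) = pcount n (n / 2 - 1)) ∧
    (Odd n →
      pcount (n + 1) 0 = pcount n 0 ∧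
      ∀ i : ℕ, i ≤ (n - 3) / 2 →
        pcount (n + 1) (i + 1) = pcount n i + pcount n (i + 1)) := by
  refine ⟨?_, ?_, ?_, ?_⟩
  · rw [pcount_eq 3 0 (by norm_num)]; exact Npc_zero 3
  · rw [pcount_eq 3 1 (by norm_num)]; decide
  · intro heven
    obtain ⟨t, ht⟩ := heven
    refine ⟨?_, ?_, ?_⟩
    · rw [pcount_eq (n+1) 0 (by omega), pcount_eq n 0 (by omega), Npc_zero, Npc_zero]
    · intro i hi
      rw [pcount_eq (n+1) (i+1) (by omega), pcount_eq n i (by omega),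
        pcount_eq n (i+1) (by omega), Npc_succ (show 2*i+2 ≤ n by omega)]
      omega
    · have hnd : n/2 = t := by omega
      rw [hnd]
      obtain ⟨s, rfl⟩ : ∃ s, t = s + 1 := ⟨t - 1, by omega⟩
      have hss : s + 1 - 1 = s := rfl
      rw [hss, pcount_eq (n+1) (s+1) (by omega), pcount_eq n s (by omega),
        Npc_succ (show 2*s+2 ≤ n by omega), Npc_eq_zero (by omega) (by omega)]
      omega
  · intro hodd
    obtain ⟨t, ht⟩ := hodd
    refine ⟨?_, ?_⟩
    · rw [pcount_eq (n+1) 0 (by omega), pcount_eq n 0 (by omega), Npc_zero, Npc_zero]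
    · intro i hi
      rw [pcount_eq (n+1) (i+1) (by omega), pcount_eq n i (by omega),
        pcount_eq n (i+1) (by omega), Npc_succ (show 2*i+2 ≤ n by omega)]
      omega
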